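/- Let ξ be a real number and let 𝔸_ξ be the set of pairs (f,g) of functions ℕ → ℕ such that f(n)·g(n) = 0 for all n and the triple (f, g, id) names ξ. Let E be a continuous operator mapping pairs of functions ℕ → ℕ to functions ℕ → ℕ (continuity: for every pair (f,g) and every x there is z such that E(f',g')(x) = E(f,g)(x) whenever f', g' agree with f, g on all t ≤ z). If for every (f,g) ∈ 𝔸_ξ there exists s with E(f,g)(s) = 0, then there exists T ∈ ℕ such that for all (f,g) ∈ 𝔸_ξ there exists s ≤ T with E(f,g)(s) = 0. -/

import Mathlib

def Names (f g h : ℕ → ℕ) (ξ : ℝ) : Prop :=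
  ∀ n : ℕ, |((f n : ℝ) - (g n : ℝ)) / ((h n : ℝ) + 1) - ξ| < 1 / (n + 1)

def InA (ξ : ℝ) (f g : ℕ → ℕ) : Prop :=
  (∀ n, f n * g n = 0) ∧ Names f g id ξ

noncomputable section StmtAux

open Classical

/-- The integer code at level `n` determined by a boolean choice. -/
noncomputable def db (ξ : ℝ) (b : ℕ → Bool) (n : ℕ) : ℤ :=
  if b n = true ∧ Int.fract ((n + 1 : ℝ) * ξ) ≠ 0 then ⌊(n + 1 : ℝ) * ξ⌋ + 1
  else ⌊(n + 1 : ℝ) * ξ⌋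

noncomputable def fb (ξ : ℝ) (b : ℕ → Bool) (n : ℕ) : ℕ := (db ξ b n).toNat

noncomputable def gb (ξ : ℝ) (b : ℕ → Bool) (n : ℕ) : ℕ := (-(db ξ b n)).toNat

lemma db_eq_of_eq (ξ : ℝ) (b b' : ℕ → Bool) (n : ℕ) (h : b n = b' n) :
    db ξ b n = db ξ b' n := by
  simp only [db, h]

lemma db_abs_lt (ξ : ℝ) (b : ℕ → Bool) (n : ℕ) :
    |((db ξ b n : ℝ)) - (n + 1 : ℝ) * ξ| < 1 := by
  set x : ℝ := (n + 1 : ℝ) * ξ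
  have hfl : (0 : ℝ) ≤ Int.fract x := Int.fract_nonneg x
  have hfu : Int.fract x < 1 := Int.fract_lt_one x
  have hself : x - (⌊x⌋ : ℝ) = Int.fract x := Int.self_sub_floor x
  unfold db
  split_ifs with h
  · have hpos : 0 < Int.fract x := lt_of_le_of_ne hfl (Ne.symm h.2)
    rw [abs_lt]
    push_cast
    constructor <;> linarith
  · rw [abs_lt]
    push_cast
    constructor <;> linarith

lemma fb_sub_gb (ξ : ℝ) (b : ℕ → Bool) (n : ℕ) :
    ((fb ξ b n : ℝ)) - (gb ξ b n : ℝ) = (db ξ b n : ℝ) := by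
  have h : ((db ξ b n).toNat : ℤ) - ((-(db ξ b n)).toNat : ℤ) = db ξ b n :=
    Int.toNat_sub_toNat_neg _
  have h2 := congrArg (fun z : ℤ => (z : ℝ)) h
  push_cast at h2
  simpa [fb, gb] using h2

lemma mem_InA (ξ : ℝ) (b : ℕ → Bool) : InA ξ (fb ξ b) (gb ξ b) := by
  constructor
  · intro n
    rcases le_or_gt (db ξ b n) 0 with h | h
    · have h0 : (db ξ b n).toNat = 0 := Int.toNat_of_nonpos h
      simp [fb, gb, h0]
    · have h0 : (-(db ξ b n)).toNat = 0 := Int.toNat_of_nonpos (by omega)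
      simp [fb, gb, h0]
  · intro n
    have hn1 : (0 : ℝ) < (n : ℝ) + 1 := by positivity
    have key := db_abs_lt ξ b n
    have heq : ((fb ξ b n : ℝ) - (gb ξ b n : ℝ)) / (((id n : ℕ) : ℝ) + 1) - ξ
        = ((db ξ b n : ℝ) - (n + 1 : ℝ) * ξ) / ((n : ℝ) + 1) := by
      rw [fb_sub_gb]
      simp only [id]
      field_simp
    show |((fb ξ b n : ℝ) - (gb ξ b n : ℝ)) / (((id n : ℕ) : ℝ) + 1) - ξ| < 1 / ((n : ℝ) + 1)
    rw [heq, abs_div, abs_of_pos hn1, div_lt_div_iff₀ hn1 hn1]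
    nlinarith [abs_nonneg ((db ξ b n : ℝ) - (n + 1 : ℝ) * ξ)]

lemma repr_InA (ξ : ℝ) (f g : ℕ → ℕ) (h : InA ξ f g) :
    ∃ b : ℕ → Bool, f = fb ξ b ∧ g = gb ξ b := by
  obtain ⟨hmul, hnm⟩ := h
  set b : ℕ → Bool := fun n => decide ((f n : ℤ) - (g n : ℤ) = ⌊(n + 1 : ℝ) * ξ⌋ + 1) with hb
  have hdb : ∀ n, db ξ b n = (f n : ℤ) - (g n : ℤ) := by
    intro n
    set x : ℝ := (n + 1 : ℝ) * ξ with hx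
    set d : ℤ := (f n : ℤ) - (g n : ℤ) with hd
    have hn1 : (0 : ℝ) < (n : ℝ) + 1 := by positivity
    have key : |(d : ℝ) - x| < 1 := by
      have h1 := hnm n
      have heq : ((f n : ℝ) - (g n : ℝ)) / (((id n : ℕ) : ℝ) + 1) - ξ
          = ((d : ℝ) - x) / ((n : ℝ) + 1) := by
        simp only [id, hd, hx]
        push_cast
        field_simp
      rw [heq, abs_div, abs_of_pos hn1, div_lt_div_iff₀ hn1 hn1] at h1
      nlinarith [abs_nonneg ((d : ℝ) - x)]
    have hfl : (⌊x⌋ : ℝ) ≤ x := Int.floor_le x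
    have hfu : x < (⌊x⌋ : ℝ) + 1 := Int.lt_floor_add_one x
    rw [abs_lt] at key
    have hlow : ⌊x⌋ ≤ d := by
      have : ((⌊x⌋ : ℤ) : ℝ) - 1 < (d : ℝ) := by linarith
      have : (⌊x⌋ : ℤ) - 1 < d := by exact_mod_cast this
      omega
    have hhigh : d ≤ ⌊x⌋ + 1 := by
      have : (d : ℝ) < ((⌊x⌋ : ℤ) : ℝ) + 2 := by linarith
      have : d < (⌊x⌋ : ℤ) + 2 := by exact_mod_cast this
      omega
    by_cases hc : d = ⌊x⌋ + 1
    · have hfr : Int.fract x ≠ 0 := by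
        intro h0
        have h2 := Int.self_sub_floor x
        rw [h0] at h2
        have hdr : (d : ℝ) = (⌊x⌋ : ℝ) + 1 := by rw [hc]; push_cast; ring
        linarith [key.2]
      have hbn : b n = true := by simp [hb, ← hd, hc]; rfl
      simp only [db, ← hx]
      rw [if_pos ⟨hbn, hfr⟩, hc]
    · have hdeq : d = ⌊x⌋ := by omega
      have hbn : b n = false := by simp [hb, ← hd, hc]; exact hc
      simp only [db, ← hx]
      rw [if_neg (by simp [hbn]), hdeq]
  refine ⟨b, funext fun n => ?_, funext fun n => ?_⟩
  · show f n = fb ξ b n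
    rw [fb, hdb n]
    rcases Nat.mul_eq_zero.mp (hmul n) with h0 | h0
    · rw [h0]
      have : (f n : ℤ) - (g n : ℤ) ≤ 0 := by simp [h0]
      omega
    · rw [h0]
      simp
  · show g n = gb ξ b n
    rw [gb, hdb n]
    rcases Nat.mul_eq_zero.mp (hmul n) with h0 | h0
    · rw [h0]
      simp
    · rw [h0]
      have : (0 : ℤ) ≤ (f n : ℤ) - (g n : ℤ) := by simp [h0]
      omega

end StmtAux

theorem stmt_4 (ξ : ℝ) (E : (ℕ → ℕ) → (ℕ → ℕ) → ℕ → ℕ)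
    (hcont : ∀ f g : ℕ → ℕ, ∀ x : ℕ, ∃ z : ℕ, ∀ f' g' : ℕ → ℕ,
      (∀ t ≤ z, f' t = f t) → (∀ t ≤ z, g' t = g t) → E f' g' x = E f g x)
    (hzero : ∀ f g : ℕ → ℕ, InA ξ f g → ∃ s, E f g s = 0) :
    ∃ T : ℕ, ∀ f g : ℕ → ℕ, InA ξ f g → ∃ s ≤ T, E f g s = 0 := by
  classical
  choose s hs using fun b : ℕ → Bool => hzero _ _ (mem_InA ξ b)
  choose z hz using fun b : ℕ → Bool => hcont (fb ξ b) (gb ξ b) (s b)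
  set U : (ℕ → Bool) → Set (ℕ → Bool) := fun b => {b' | ∀ t ≤ z b, b' t = b t} with hU
  have hUopen : ∀ b, IsOpen (U b) := by
    intro b
    have heq : U b = ⋂ t ∈ Set.Iic (z b), (fun b' : ℕ → Bool => b' t) ⁻¹' {b t} := by
      ext b'
      simp [hU, Set.mem_Iic]
    rw [heq]
    exact (Set.finite_Iic _).isOpen_biInter fun t _ =>
      (continuous_apply t).isOpen_preimage _ (isOpen_discrete _)
  have hcover : (Set.univ : Set (ℕ → Bool)) ⊆ ⋃ b, U b := fun b _ =>
    Set.mem_iUnion.mpr ⟨b, fun t _ => rfl⟩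
  obtain ⟨I, hI⟩ := isCompact_univ.elim_finite_subcover U hUopen hcover
  refine ⟨I.sup s, ?_⟩
  intro f g hfg
  obtain ⟨b, hf, hg⟩ := repr_InA ξ f g hfg
  have hbmem := hI (Set.mem_univ b)
  simp only [Set.mem_iUnion] at hbmem
  obtain ⟨b₀, hb₀I, hbU⟩ := hbmem
  refine ⟨s b₀, Finset.le_sup hb₀I, ?_⟩
  have hEeq : E (fb ξ b) (gb ξ b) (s b₀) = E (fb ξ b₀) (gb ξ b₀) (s b₀) := by
    refine hz b₀ _ _ (fun t ht => ?_) (fun t ht => ?_)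
    · unfold fb
      rw [db_eq_of_eq ξ b b₀ t (hbU t ht)]
    · unfold gb
      rw [db_eq_of_eq ξ b b₀ t (hbU t ht)]
  rw [hf, hg, hEeq, hs b₀]
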